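/- Let Γ_+, Γ_0, Γ_- be the contraction operators on the 8-dimensional graded space Λ_q(u_+) defined by the explicit matrices (in the ordered bases {1}, {v_1,v_0,v_{-1}}, {v_1∧v_0, v_1∧v_{-1}, v_0∧v_{-1}}, {v_1∧v_0∧v_{-1}}): Γ_+⁽¹⁾=(1 0 0), Γ_0⁽¹⁾=(0 1 0), Γ_-⁽¹⁾=(0 0 1); Γ_+⁽²⁾ has rows (0 0 0),(q^{-2} 0 0),(0 1 0); Γ_0⁽²⁾=diag(−1, −q(q−q^{-1}), q^{-2}); Γ_-⁽²⁾ has rows (0 −1 0),(0 0 −1),(0 0 0); Γ_+⁽³⁾=(0 0 q²)ᵀ, Γ_0⁽³⁾=(0 −q² 0)ᵀ, Γ_-⁽³⁾=(q⁴ 0 0)ᵀ; and let adjoints be taken with respect to the inner product with Gram matrices M⁽⁰⁾=(1), M⁽¹⁾=diag(1,1,q²), M⁽²⁾=diag(1,q⁴,q²), M⁽³⁾=(1). Then for 0 < q < 1 there do NOT exist scalars t, t' and nonzero scalars c_0, c_1, c_2, c_3 such that for all degrees k ∈ {1, 2}: (c_{k+1}/c_k)·Γ_-⁽ᵏ⁺¹⁾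 Γ_0⁽ᵏ⁺¹⁾* = (c_k/c_{k−1})·(t·Γ_0⁽ᵏ⁾* Γ_-⁽ᵏ⁾ + t'·Γ_+⁽ᵏ⁾* Γ_0⁽ᵏ⁾). -/

import Mathlib

open Matrix

noncomputable section

-- Contraction operators Γ₊ = γ₋(w₁), Γ₀ = γ₋(w₀), Γ₋ = γ₋(w₋₁) in the ordered bases
-- {1}, {v₁, v₀, v₋₁}, {v₁∧v₀, v₁∧v₋₁, v₀∧v₋₁}, {v₁∧v₀∧v₋₁}.

def Gp1 : Matrix (Fin 1) (Fin 3) ℝ := !![1, 0, 0]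
def G01 : Matrix (Fin 1) (Fin 3) ℝ := !![0, 1, 0]
def Gm1 : Matrix (Fin 1) (Fin 3) ℝ := !![0, 0, 1]

def Gp2 (q : ℝ) : Matrix (Fin 3) (Fin 3) ℝ := !![0, 0, 0; q⁻¹ ^ 2, 0, 0; 0, 1, 0]
def G02 (q : ℝ) : Matrix (Fin 3) (Fin 3) ℝ :=
  !![-1, 0, 0; 0, -(q * (q - q⁻¹)), 0; 0, 0, q⁻¹ ^ 2]
def Gm2 : Matrix (Fin 3) (Fin 3) ℝ := !![0, -1, 0; 0, 0, -1; 0, 0, 0]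

def Gp3 (q : ℝ) : Matrix (Fin 3) (Fin 1) ℝ := !![0; 0; q ^ 2]
def G03 (q : ℝ) : Matrix (Fin 3) (Fin 1) ℝ := !![0; -q ^ 2; 0]
def Gm3 (q : ℝ) : Matrix (Fin 3) (Fin 1) ℝ := !![q ^ 4; 0; 0]

-- Gram matrices of the invariant inner product in each degree.
def M0 : Matrix (Fin 1) (Fin 1) ℝ := 1
def M1 (q : ℝ) : Matrix (Fin 3) (Fin 3) ℝ := diagonal ![1, 1, q ^ 2]
def M2 (q : ℝ) : Matrix (Fin 3) (Fin 3) ℝ := diagonal ![1, q ^ 4, q ^ 2]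
def M3 : Matrix (Fin 1) (Fin 1) ℝ := 1

lemma M1_inv (q : ℝ) (hq : q ≠ 0) :
    (M1 q)⁻¹ = diagonal ![1, 1, (q ^ 2)⁻¹] := by
  apply inv_eq_right_inv
  ext i j
  fin_cases i <;> fin_cases j <;>
    simp [M1, Matrix.mul_apply, Fin.sum_univ_succ, diagonal] <;> field_simp

lemma M2_inv (q : ℝ) (hq : q ≠ 0) :
    (M2 q)⁻¹ = diagonal ![1, (q ^ 4)⁻¹, (q ^ 2)⁻¹] := by
  apply inv_eq_right_inv
  ext i j
  fin_cases i <;> fin_cases j <;>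
    simp [M2, Matrix.mul_apply, Fin.sum_univ_succ, diagonal] <;> field_simp


/-- For 0 < q < 1 there do not exist scalars t, t' and nonzero rescaling constants
c₀, c₁, c₂, c₃ such that for k ∈ {1,2}:
(c_{k+1}/c_k)·Γ₋⁽ᵏ⁺¹⁾ Γ₀⁽ᵏ⁺¹⁾* = (c_k/c_{k−1})·(t·Γ₀⁽ᵏ⁾* Γ₋⁽ᵏ⁾ + t'·Γ₊⁽ᵏ⁾* Γ₀⁽ᵏ⁾),
where the adjoints are T⁽ᵏ⁾* = (M⁽ᵏ⁾)⁻¹ (T⁽ᵏ⁾)† M⁽ᵏ⁻¹⁾. -/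
theorem stmt_17 (q : ℝ) (hq0 : 0 < q) (hq1 : q < 1) :
    ¬ ∃ t t' c0 c1 c2 c3 : ℝ, c0 ≠ 0 ∧ c1 ≠ 0 ∧ c2 ≠ 0 ∧ c3 ≠ 0 ∧
      (c2 / c1) • (Gm2 * ((M2 q)⁻¹ * (G02 q)ᴴ * M1 q)) =
        (c1 / c0) • (t • (((M1 q)⁻¹ * G01ᴴ * M0) * Gm1)
          + t' • (((M1 q)⁻¹ * Gp1ᴴ * M0) * G01)) ∧
      (c3 / c2) • (Gm3 q * (M3⁻¹ * (G03 q)ᴴ * M2 q)) =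
        (c2 / c1) • (t • (((M2 q)⁻¹ * (G02 q)ᴴ * M1 q) * Gm2)
          + t' • (((M2 q)⁻¹ * (Gp2 q)ᴴ * M1 q) * G02 q)) := by
  rintro ⟨t, t', c0, c1, c2, c3, hc0, hc1, hc2, hc3, h1, h2⟩
  have hq : q ≠ 0 := ne_of_gt hq0
  rw [M1_inv q hq] at h1
  rw [M2_inv q hq] at h1 h2
  have e1 := congrFun (congrFun h1 0) 1
  have e2 := congrFun (congrFun h1 1) 2
  have e3 := congrFun (congrFun h2 1) 2
  simp [Gm2, G02, G01, Gp1, Gp2, Gm1, Gm3, G03, M0, M1, M2, M3, inv_one, Matrix.mul_apply,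
    Fin.sum_univ_succ, Matrix.smul_apply, Matrix.add_apply, diagonal, Matrix.vecMul, dotProduct, Matrix.of_apply, Matrix.cons_val_zero, Matrix.cons_val_one, Matrix.conjTranspose_apply, Matrix.transpose_apply, Matrix.vecHead, Matrix.vecTail, Matrix.transpose] at e1 e2 e3
  rcases e3 with (h|h)|e3
  · exact hc2 h
  · exact hc1 h
  field_simp at e1 e2 e3
  -- e1 : c2 * (q * q - 1) * c0 = c1 * t' * (c1 * q ^ 4)
  -- e2 : -(c2 * c0) = c1 * t * (c1 * q ^ 2)
  -- e3 : t * (q * q - 1) * (q ^ 4 * q ^ 2) + t' * q ^ 2 * q ^ 4 = 0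
  have key : t * (q * q - 1) + t' = 0 := by
    have h6 : (q : ℝ) ^ 6 ≠ 0 := pow_ne_zero 6 hq
    have h0 : (t * (q * q - 1) + t') * q ^ 6 = 0 := by linear_combination q ^ 6 * e3
    rcases mul_eq_zero.1 h0 with h | h
    · exact h
    · exact absurd h h6
  have final : (c2 * c0) * ((q ^ 2 - 1) * (1 - q ^ 2)) = 0 := by
    linear_combination e1 + c1 ^ 2 * q ^ 4 * key + q ^ 2 * (q ^ 2 - 1) * e2
  have hne : (q ^ 2 - 1) * (1 - q ^ 2) ≠ 0 := by
    have hq2 : q ^ 2 < 1 := by nlinarith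
    intro h
    nlinarith
  rcases mul_eq_zero.1 final with h | h
  · exact mul_ne_zero hc2 hc0 h
  · exact hne h
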